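/- Let T' be the tree obtained by taking a full binary tree B of depth h rooted at s' with 2^h leaves, and replacing its i-th leaf by a rooted tree T_i (identifying the leaf with the root s_i of T_i). In the firefighter process on T' with fire at s', any strategy that protects exactly one vertex at each depth 1, …, h of B (with no protected vertex an ancestor of another and all ancestors of protected vertices burned) results in exactly one root s_i burning at time h, and exactly h + 1 vertices of B burn in total. -/

import Mathlib

attribute [local instance] Classical.propDecidable

/-- A finite rooted tree, given by a parent function and a depth function. -/
structure FFTree (V : Type*) where
  root : V
  parent : V → V
  depth : V → ℕ
  depth_root : depth root = 0
  parent_root : parent root = root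
  depth_parent : ∀ v, v ≠ root → depth v = depth (parent v) + 1

namespace FFTree

variable {V : Type*} [Fintype V] [DecidableEq V] (T : FFTree V)

/-- `u` is an ancestor of `v` (possibly `u = v`). -/
def IsAncestor (u v : V) : Prop := ∃ n : ℕ, T.parent^[n] v = u

/-- The subtree rooted at `v`: all descendants of `v`, including `v`. -/
noncomputable def subtree (v : V) : Finset V :=
  Finset.univ.filter (fun u => T.IsAncestor v u)

/-- The children of a vertex. -/
noncomputable def children (v : V) : Finset V :=
  Finset.univ.filter (fun u => u ≠ T.root ∧ T.parent u = v)

/-- The set of vertices burned by the end of time step `t` in the firefighter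
process on the rooted tree, where the fire starts at the root and `p i` is the
vertex protected in round `i` (if any); in each round the protection happens
first and then the fire spreads from burning vertices to their unprotected
children. -/
noncomputable def burn (p : ℕ → Option V) : ℕ → Finset V
  | 0 => {T.root}
  | t + 1 => burn p t ∪ Finset.univ.filter
      (fun v => v ≠ T.root ∧ T.parent v ∈ burn p t ∧ ∀ i ≤ t + 1, p i ≠ some v)

/-- `v` is protected at some round of the strategy `p`. -/
def Protected (p : ℕ → Option V) (v : V) : Prop := ∃ i, p i = some v

/-- A valid strategy: nothing is protected at time `0`, and a vertex protected in
round `t` is neither burned before round `t` nor previously protected. -/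
def Valid (p : ℕ → Option V) : Prop :=
  p 0 = none ∧ ∀ t v, p t = some v → v ∉ T.burn p (t - 1) ∧ ∀ i < t, p i ≠ some v

/-- `v` eventually burns under strategy `p`. -/
def Burns (p : ℕ → Option V) (v : V) : Prop := ∃ t, v ∈ T.burn p t

/-- `v` is saved (never burns) under strategy `p`. -/
def Saved (p : ℕ → Option V) (v : V) : Prop := ∀ t, v ∉ T.burn p t

/-- The number of vertices saved by strategy `p`. -/
noncomputable def savedCount (p : ℕ → Option V) : ℕ :=
  (Finset.univ.filter (T.Saved p)).card

/-- The number of vertices burned by strategy `p`. -/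
noncomputable def burnedCount (p : ℕ → Option V) : ℕ :=
  (Finset.univ.filter (T.Burns p)).card

end FFTree

namespace FFTree

variable {V : Type*} [Fintype V] [DecidableEq V] (T : FFTree V)

lemma burn_zero (p : ℕ → Option V) : T.burn p 0 = {T.root} := rfl

lemma burn_succ (p : ℕ → Option V) (t : ℕ) :
    T.burn p (t + 1) = T.burn p t ∪ Finset.univ.filter
      (fun v => v ≠ T.root ∧ T.parent v ∈ T.burn p t ∧ ∀ i ≤ t + 1, p i ≠ some v) := rfl

lemma burn_mono (p : ℕ → Option V) {s t : ℕ} (hst : s ≤ t) :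
    T.burn p s ⊆ T.burn p t := by
  induction t, hst using Nat.le_induction with
  | base => exact subset_rfl
  | succ n hn ih => rw [burn_succ]; exact ih.trans Finset.subset_union_left

lemma root_mem_burn (p : ℕ → Option V) (t : ℕ) : T.root ∈ T.burn p t := by
  refine T.burn_mono p (Nat.zero_le t) ?_
  rw [burn_zero]; exact Finset.mem_singleton_self _

lemma depth_le_of_mem_burn (p : ℕ → Option V) :
    ∀ t, ∀ v ∈ T.burn p t, T.depth v ≤ t := by
  intro t
  induction t with
  | zero =>
    intro v hv
    rw [burn_zero, Finset.mem_singleton] at hv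
    simp [hv, T.depth_root]
  | succ t ih =>
    intro v hv
    rw [burn_succ, Finset.mem_union] at hv
    rcases hv with hv | hv
    · exact (ih v hv).trans (Nat.le_succ t)
    · rw [Finset.mem_filter] at hv
      obtain ⟨-, hroot, hpar, -⟩ := hv
      rw [T.depth_parent v hroot]
      exact Nat.succ_le_succ (ih _ hpar)

lemma mem_burn_depth (p : ℕ → Option V) :
    ∀ t, ∀ v ∈ T.burn p t, v ∈ T.burn p (T.depth v) := by
  intro t
  induction t with
  | zero =>
    intro v hv
    rw [burn_zero, Finset.mem_singleton] at hv
    subst hv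
    rw [T.depth_root, burn_zero]; exact Finset.mem_singleton_self _
  | succ t ih =>
    intro v hv
    rw [burn_succ, Finset.mem_union] at hv
    rcases hv with hv | hv
    · exact ih v hv
    · rw [Finset.mem_filter] at hv
      obtain ⟨-, hroot, hpar, hcond⟩ := hv
      have hd := T.depth_parent v hroot
      have hple : T.depth (T.parent v) ≤ t := T.depth_le_of_mem_burn p t _ hpar
      rw [hd, burn_succ, Finset.mem_union, Finset.mem_filter]
      refine Or.inr ⟨Finset.mem_univ _, hroot, ih _ hpar, ?_⟩
      intro i hi
      exact hcond i (hi.trans (Nat.succ_le_succ hple))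

lemma not_burn_of_protected (p : ℕ → Option V) (hp : T.Valid p) {i : ℕ} {v : V}
    (hi : p i = some v) : ∀ t, v ∉ T.burn p t := by
  have hi0 : i ≠ 0 := by
    intro h0; rw [h0, hp.1] at hi; exact Option.some_ne_none v hi.symm
  have hv : v ∉ T.burn p (i - 1) := (hp.2 i v hi).1
  intro t
  induction t with
  | zero =>
    intro hmem
    rw [burn_zero, Finset.mem_singleton] at hmem
    subst hmem
    exact hv (T.root_mem_burn p _)
  | succ t ih =>
    intro hmem
    have hmem' := hmem
    rw [burn_succ, Finset.mem_union] at hmem'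
    rcases hmem' with hm | hm
    · exact ih hm
    · rw [Finset.mem_filter] at hm
      obtain ⟨-, -, -, hcond⟩ := hm
      by_cases hle : i ≤ t + 1
      · exact hcond i hle hi
      · have : t + 1 ≤ i - 1 := by omega
        exact hv (T.burn_mono p this hmem)

/-- The canonical burning chain: starting from the root, at each step go to the
child that is not the designated vertex `Q t`. -/
noncomputable def chainB (Q : ℕ → V) : ℕ → V
  | 0 => T.root
  | t + 1 =>
      if hc : ((T.children (chainB Q t)).erase (Q t)).Nonempty then hc.choose
      else T.root

lemma chainB_zero (Q : ℕ → V) : T.chainB Q 0 = T.root := rfl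

lemma chainB_succ (Q : ℕ → V) (t : ℕ) :
    T.chainB Q (t + 1) =
      if hc : ((T.children (T.chainB Q t)).erase (Q t)).Nonempty then hc.choose
      else T.root := by rw [chainB]

end FFTree

/-- In the firefighter process on a tree `T'` whose first `h` levels form a full
binary tree (every vertex at depth `< h` has exactly two children), any strategy
that protects exactly one vertex at each depth `1, …, h` (none an ancestor of
another, and all proper ancestors of protected vertices burn) results in exactly
one vertex at depth `h` burning at time `h`, and exactly `h + 1` vertices of the
binary-tree part (depth `≤ h`) burn in total. -/
theorem binary_tree_composition_burning
    {V : Type*} [Fintype V] [DecidableEq V] (T : FFTree V) (h : ℕ) (hh : 1 ≤ h)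
    (hbin : ∀ v : V, T.depth v < h → (T.children v).card = 2)
    (p : ℕ → Option V) (hp : T.Valid p) (P : Fin h → V)
    (hdepth : ∀ i : Fin h, T.depth (P i) = i.val + 1)
    (hprot : ∀ v : V, FFTree.Protected p v ↔ ∃ i : Fin h, P i = v)
    (hanc : ∀ i j : Fin h, i ≠ j → ¬ T.IsAncestor (P i) (P j))
    (hburnanc : ∀ i : Fin h, ∀ u : V,
      T.IsAncestor u (P i) → u ≠ P i → T.Burns p u) :
    (∃! v : V, T.depth v = h ∧ v ∈ T.burn p h) ∧
    (Finset.univ.filter (fun v => T.depth v ≤ h ∧ T.Burns p v)).card = h + 1 := by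
  classical
  -- the designated protected vertex at each level (with junk values beyond `h`)
  set Q : ℕ → V := fun t => if ht : t < h then P ⟨t, ht⟩ else T.root with hQdef
  set b : ℕ → V := T.chainB Q with hbdef
  -- protected vertices never burn
  have hPnb : ∀ (j : Fin h) (t : ℕ), P j ∉ T.burn p t := by
    intro j t
    obtain ⟨i, hi⟩ := (hprot (P j)).mpr ⟨j, rfl⟩
    exact T.not_burn_of_protected p hp hi t
  have hPnroot : ∀ j : Fin h, P j ≠ T.root := by
    intro j hj
    have := hdepth j
    rw [hj, T.depth_root] at this
    omega
  -- the main invariant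
  have key : ∀ t, t ≤ h →
      T.burn p t = (Finset.range (t + 1)).image b ∧
      (∀ s, s ≤ t → T.depth (b s) = s) ∧
      (∀ s, s < t → b (s + 1) ≠ Q s ∧ T.children (b s) = {Q s, b (s + 1)}) := by
    intro t
    induction t with
    | zero =>
      intro _
      refine ⟨?_, ?_, by omega⟩
      · rw [T.burn_zero]
        ext x
        simp [hbdef, T.chainB_zero, Finset.mem_image, eq_comm]
      · intro s hs
        interval_cases s
        simp [hbdef, T.chainB_zero, T.depth_root]
    | succ t ih =>
      intro ht1
      obtain ⟨I1, I2, I3⟩ := ih (by omega)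
      have htlt : t < h := by omega
      set j : Fin h := ⟨t, htlt⟩ with hjdef
      have hQt : Q t = P j := by simp [hQdef, htlt]; rfl
      have hbt_depth : T.depth (b t) = t := I2 t le_rfl
      -- `P j` is a child of `b t`
      have hPj_depth : T.depth (P j) = t + 1 := hdepth j
      have hpardepth : T.depth (T.parent (P j)) = t := by
        have := T.depth_parent (P j) (hPnroot j)
        omega
      have hparburns : T.Burns p (T.parent (P j)) := by
        refine hburnanc j (T.parent (P j)) ⟨1, by simp⟩ ?_
        intro he
        rw [he] at hpardepth
        omega
      have hpar : T.parent (P j) = b t := by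
        obtain ⟨t', ht'⟩ := hparburns
        have hmem := T.mem_burn_depth p t' _ ht'
        rw [hpardepth, I1, Finset.mem_image] at hmem
        obtain ⟨s, hs, hbs⟩ := hmem
        rw [Finset.mem_range] at hs
        have : T.depth (b s) = s := I2 s (by omega)
        rw [hbs, hpardepth] at this
        rw [← hbs, ← this]
      have hPjchild : P j ∈ T.children (b t) := by
        rw [FFTree.children, Finset.mem_filter]
        exact ⟨Finset.mem_univ _, hPnroot j, hpar⟩
      have hcard : (T.children (b t)).card = 2 := hbin _ (by rw [hbt_depth]; exact htlt)
      have herase : ((T.children (b t)).erase (Q t)).Nonempty := by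
        rw [← Finset.card_pos, Finset.card_erase_of_mem (hQt ▸ hPjchild), hcard]
        omega
      have hmem1 : b (t + 1) ∈ (T.children (b t)).erase (Q t) := by
        rw [hbdef, T.chainB_succ, dif_pos herase]
        exact herase.choose_spec
      rw [Finset.mem_erase] at hmem1
      obtain ⟨hne, hchild⟩ := hmem1
      rw [FFTree.children, Finset.mem_filter] at hchild
      obtain ⟨-, hb1root, hb1par⟩ := hchild
      have hb1depth : T.depth (b (t + 1)) = t + 1 := by
        rw [T.depth_parent _ hb1root, hb1par, hbt_depth]
      have hb1child : b (t + 1) ∈ T.children (b t) := by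
        rw [FFTree.children, Finset.mem_filter]
        exact ⟨Finset.mem_univ _, hb1root, hb1par⟩
      have hchildren : T.children (b t) = {Q t, b (t + 1)} := by
        symm
        refine Finset.eq_of_subset_of_card_le ?_ ?_
        · intro x hx
          rw [Finset.mem_insert, Finset.mem_singleton] at hx
          rcases hx with hx | hx
          · rw [hx, hQt]; exact hPjchild
          · rw [hx]; exact hb1child
        · rw [hcard, Finset.card_insert_of_notMem (by simp [Ne.symm hne]),
            Finset.card_singleton]
      -- vertices in the new burn set are never protected ones
      have hnotP : ∀ x ∈ T.burn p (t + 1), ∀ k : Fin h, x ≠ P k := by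
        intro x hx k he
        rw [he] at hx
        exact hPnb k _ hx
      -- the burn set at time `t+1`
      have I1' : T.burn p (t + 1) = (Finset.range (t + 2)).image b := by
        apply Finset.Subset.antisymm
        · intro x hx
          have hxnotP := hnotP x hx
          rw [T.burn_succ, Finset.mem_union] at hx
          rcases hx with hx | hx
          · rw [I1] at hx
            exact Finset.image_subset_image (by intro y hy; simp at hy ⊢; omega) hx
          · rw [Finset.mem_filter] at hx
            obtain ⟨-, hxroot, hxpar, hxcond⟩ := hx
            rw [I1, Finset.mem_image] at hxpar
            obtain ⟨s, hs, hbs⟩ := hxpar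
            rw [Finset.mem_range] at hs
            have hxchild : x ∈ T.children (b s) := by
              rw [FFTree.children, Finset.mem_filter]
              exact ⟨Finset.mem_univ _, hxroot, hbs.symm⟩
            rcases Nat.lt_or_ge s t with hst | hst
            · obtain ⟨-, hcs⟩ := I3 s hst
              rw [hcs, Finset.mem_insert, Finset.mem_singleton] at hxchild
              rcases hxchild with hx' | hx'
              · exfalso
                refine hxnotP ⟨s, by omega⟩ ?_
                rw [hx', hQdef]
                simp [show s < h by omega]
              · rw [Finset.mem_image]
                exact ⟨s + 1, by rw [Finset.mem_range]; omega, hx'.symm⟩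
            · have hst' : s = t := by omega
              subst hst'
              rw [hchildren, Finset.mem_insert, Finset.mem_singleton] at hxchild
              rcases hxchild with hx' | hx'
              · exact absurd (hQt ▸ hx') (hxnotP j)
              · rw [Finset.mem_image]
                exact ⟨s + 1, by rw [Finset.mem_range]; omega, hx'.symm⟩
        · intro x hx
          rw [Finset.mem_image] at hx
          obtain ⟨s, hs, hbs⟩ := hx
          rw [Finset.mem_range] at hs
          rcases Nat.lt_or_ge s (t + 1) with hst | hst
          · refine T.burn_mono p (Nat.le_succ t) ?_
            rw [I1, Finset.mem_image]
            exact ⟨s, by rw [Finset.mem_range]; omega, hbs⟩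
          · have hst' : s = t + 1 := by omega
            subst hst'
            subst hbs
            rw [T.burn_succ, Finset.mem_union, Finset.mem_filter]
            refine Or.inr ⟨Finset.mem_univ _, hb1root, ?_, ?_⟩
            · rw [hb1par, I1, Finset.mem_image]
              exact ⟨t, by rw [Finset.mem_range]; omega, rfl⟩
            · intro i _ hcontr
              obtain ⟨k, hk⟩ := (hprot (b (t + 1))).mp ⟨i, hcontr⟩
              have : (k : ℕ) + 1 = t + 1 := by rw [← hdepth k, hk, hb1depth]
              have hkj : k = j := by
                apply Fin.ext
                simp [hjdef]; omega
              rw [hkj] at hk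
              exact hne (by rw [← hk, hQt])
      refine ⟨I1', ?_, ?_⟩
      · intro s hs
        rcases Nat.lt_or_ge s (t + 1) with hst | hst
        · exact I2 s (by omega)
        · have : s = t + 1 := by omega
          rw [this]; exact hb1depth
      · intro s hs
        rcases Nat.lt_or_ge s t with hst | hst
        · exact I3 s hst
        · have : s = t := by omega
          subst this
          exact ⟨hne, hchildren⟩
  obtain ⟨I1, I2, -⟩ := key h le_rfl
  constructor
  · refine ⟨b h, ⟨I2 h le_rfl, ?_⟩, ?_⟩
    · rw [I1, Finset.mem_image]
      exact ⟨h, by rw [Finset.mem_range]; omega, rfl⟩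
    · rintro v ⟨hvd, hv⟩
      rw [I1, Finset.mem_image] at hv
      obtain ⟨s, hs, hbs⟩ := hv
      rw [Finset.mem_range] at hs
      have : T.depth (b s) = s := I2 s (by omega)
      rw [hbs, hvd] at this
      rw [← hbs, this]
  · have hset : Finset.univ.filter (fun v => T.depth v ≤ h ∧ T.Burns p v) =
        (Finset.range (h + 1)).image b := by
      ext v
      rw [Finset.mem_filter, Finset.mem_image]
      constructor
      · rintro ⟨-, hvd, t', hv⟩
        have := T.burn_mono p hvd (T.mem_burn_depth p t' v hv)
        rw [I1, Finset.mem_image] at this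
        exact this
      · rintro ⟨s, hs, hbs⟩
        rw [Finset.mem_range] at hs
        refine ⟨Finset.mem_univ _, ?_, h, ?_⟩
        · rw [← hbs, I2 s (by omega)]; omega
        · rw [I1, Finset.mem_image]
          exact ⟨s, by rw [Finset.mem_range]; omega, hbs⟩
    rw [hset, Finset.card_image_of_injOn, Finset.card_range]
    intro x hx y hy hxy
    rw [Finset.coe_range, Set.mem_Iio] at hx hy
    have hxd : T.depth (b x) = x := I2 x (by omega)
    have hyd : T.depth (b y) = y := I2 y (by omega)
    rw [← hxd, ← hyd, hxy]
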